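/- Let $n \equiv 0 \pmod 4$, $n \ge 8$. Let $G$ be the graph obtained from two disjoint copies of $CP_{n/2}$ joined by a single edge $uv$, where $u$ and $v$ each have degree $n/2 - 2$ within their respective copies. Then the spectral radius of $G$ satisfies $\rho(G) < \frac{n}{2} + \frac{4}{n} - 2$. -/
import Mathlib


open SimpleGraph Finset

/-- `F` is contained in `G` as a subgraph (an injective adjacency-preserving map). -/
def containsCopy {α β : Type*} (F : SimpleGraph α) (G : SimpleGraph β) : Prop :=
  ∃ f : α ↪ β, ∀ a b, F.Adj a b → G.Adj (f a) (f b)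

/-- For even `d` this is the cocktail party graph `CP_d` (complete graph minus the
perfect matching pairing `2j, 2j+1`); for odd `d` it is the odd cocktail party graph
`L_d = CP_{d-1} ∨ K_1`. -/
def cocktail (d : ℕ) : SimpleGraph (Fin d) :=
  SimpleGraph.fromRel (fun i j => (i : ℕ) / 2 ≠ (j : ℕ) / 2)

/-- `S` is a dissociation set of `G`: every vertex of `S` has at most one neighbor in `S`. -/
def IsDissocSet {V : Type*} (G : SimpleGraph V) (S : Finset V) : Prop :=
  ∀ v ∈ S, ({u | u ∈ S ∧ G.Adj v u}).ncard ≤ 1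

/-- The dissociation number of `G`. -/
noncomputable def dissocNum {V : Type*} [Fintype V] (G : SimpleGraph V) : ℕ :=
  sSup {k | ∃ S : Finset V, IsDissocSet G S ∧ S.card = k}

open scoped Classical in
/-- The largest adjacency eigenvalue (spectral radius) of a graph. -/
noncomputable def specRad {V : Type*} [Fintype V] (G : SimpleGraph V) : ℝ :=
  sSup {x : ℝ | ∃ f : V → ℝ, f ≠ 0 ∧ (G.adjMatrix ℝ).mulVec f = x • f}

/-- Two disjoint copies of the cocktail party graph `CP_m` joined by a single edge
between vertex `0` of the left copy and vertex `0` of the right copy (every vertex of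
`CP_m` has degree `m - 2` within its copy). -/
def twoCP (m : ℕ) : SimpleGraph (Fin m ⊕ Fin m) :=
  SimpleGraph.fromRel (fun x y =>
    match x, y with
    | Sum.inl a, Sum.inl b => (a : ℕ) / 2 ≠ (b : ℕ) / 2
    | Sum.inr a, Sum.inr b => (a : ℕ) / 2 ≠ (b : ℕ) / 2
    | Sum.inl a, Sum.inr b => (a : ℕ) = 0 ∧ (b : ℕ) = 0
    | Sum.inr _, Sum.inl _ => False)


def gw (m : ℕ) (a b c : ℝ) : Fin m → ℝ :=
  fun i => if (i : ℕ) = 0 then b else if (i : ℕ) = 1 then a else c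

lemma gw_sum (m : ℕ) (hm : 4 ≤ m) (a b c : ℝ) :
    ∑ j : Fin m, gw m a b c j = a + b + ((m : ℝ) - 2) * c := by
  have h0 : (0 : ℕ) < m := by omega
  have h1 : (1 : ℕ) < m := by omega
  set z : Fin m := ⟨0, h0⟩ with hz
  set o : Fin m := ⟨1, h1⟩ with ho
  have key : ∀ j : Fin m, gw m a b c j
      = c + (if j = z then b - c else 0) + (if j = o then a - c else 0) := by
    intro j
    by_cases hj0 : (j : ℕ) = 0
    · have : j = z := by ext; simpa using hj0
      simp [this, gw, hz, ho, Fin.ext_iff]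
    · by_cases hj1 : (j : ℕ) = 1
      · have : j = o := by ext; simpa using hj1
        simp [this, gw, hz, ho, Fin.ext_iff]
      · have hjz : j ≠ z := by simp [Fin.ext_iff, hz]; omega
        have hjo : j ≠ o := by simp [Fin.ext_iff, ho]; omega
        simp [gw, hj0, hj1, hjz, hjo]
  rw [Finset.sum_congr rfl (fun j _ => key j)]
  rw [Finset.sum_add_distrib, Finset.sum_add_distrib, Finset.sum_const,
    Finset.sum_ite_eq' univ z, Finset.sum_ite_eq' univ o]
  simp [Finset.card_univ]
  ring

lemma gw_pair (m : ℕ) (hm : 4 ≤ m) (hme : m % 2 = 0) (a b c : ℝ) (i : Fin m) :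
    (∑ j : Fin m, if (j : ℕ) / 2 = (i : ℕ) / 2 then gw m a b c j else 0)
      = if (i : ℕ) / 2 = 0 then a + b else 2 * c := by
  have him : (i : ℕ) < m := i.isLt
  have hp1 : 2 * ((i : ℕ) / 2) < m := by omega
  have hp2 : 2 * ((i : ℕ) / 2) + 1 < m := by omega
  set p1 : Fin m := ⟨2 * ((i : ℕ) / 2), hp1⟩ with hP1
  set p2 : Fin m := ⟨2 * ((i : ℕ) / 2) + 1, hp2⟩ with hP2
  rw [← Finset.sum_filter]
  have hfil : univ.filter (fun j : Fin m => (j : ℕ) / 2 = (i : ℕ) / 2) = {p1, p2} := by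
    ext j
    simp [Fin.ext_iff, hP1, hP2]
    omega
  rw [hfil, Finset.sum_pair (by simp [Fin.ext_iff, hP1, hP2])]
  by_cases hi : (i : ℕ) / 2 = 0
  · simp [hi, gw, hP1, hP2]
    ring
  · have e1 : 2 * ((i : ℕ) / 2) ≠ 0 := by omega
    have e2 : 2 * ((i : ℕ) / 2) ≠ 1 := by omega
    have e3 : 2 * ((i : ℕ) / 2) + 1 ≠ 0 := by omega
    have e4 : 2 * ((i : ℕ) / 2) + 1 ≠ 1 := by omega
    simp [hi, gw, hP1, hP2, e1, e2, e3, e4]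
    ring

open scoped Classical in
lemma adj_ll (m : ℕ) (i j : Fin m) :
    (twoCP m).Adj (Sum.inl i) (Sum.inl j) ↔ (i:ℕ)/2 ≠ (j:ℕ)/2 := by
  rw [twoCP, SimpleGraph.fromRel_adj]
  constructor
  · rintro ⟨hne, h | h⟩
    · exact h
    · exact Ne.symm h
  · intro h
    exact ⟨by simp [Fin.ext_iff]; omega, Or.inl h⟩

open scoped Classical in
lemma adj_rr (m : ℕ) (i j : Fin m) :
    (twoCP m).Adj (Sum.inr i) (Sum.inr j) ↔ (i:ℕ)/2 ≠ (j:ℕ)/2 := by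
  rw [twoCP, SimpleGraph.fromRel_adj]
  constructor
  · rintro ⟨hne, h | h⟩
    · exact h
    · exact Ne.symm h
  · intro h
    exact ⟨by simp [Fin.ext_iff]; omega, Or.inl h⟩

open scoped Classical in
lemma adj_lr (m : ℕ) (i j : Fin m) :
    (twoCP m).Adj (Sum.inl i) (Sum.inr j) ↔ (i:ℕ) = 0 ∧ (j:ℕ) = 0 := by
  rw [twoCP, SimpleGraph.fromRel_adj]
  constructor
  · rintro ⟨hne, h | h⟩
    · exact h
    · exact h.elim
  · intro h
    exact ⟨by simp, Or.inl h⟩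

open scoped Classical in
lemma adj_rl (m : ℕ) (i j : Fin m) :
    (twoCP m).Adj (Sum.inr i) (Sum.inl j) ↔ (j:ℕ) = 0 ∧ (i:ℕ) = 0 := by
  rw [twoCP, SimpleGraph.fromRel_adj]
  constructor
  · rintro ⟨hne, h | h⟩
    · exact h.elim
    · exact h
  · intro h
    exact ⟨by simp, Or.inr h⟩


open scoped Classical in
lemma tcp_inner_sum (m : ℕ) (hm : 4 ≤ m) (hme : m % 2 = 0) (a b c : ℝ) (i : Fin m) :
    (∑ j : Fin m, if (i:ℕ)/2 ≠ (j:ℕ)/2 then gw m a b c j else 0)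
      = (a + b + ((m : ℝ) - 2) * c)
        - (if (i : ℕ) / 2 = 0 then a + b else 2 * c) := by
  have key : ∀ j : Fin m, (if (i:ℕ)/2 ≠ (j:ℕ)/2 then gw m a b c j else 0)
      = gw m a b c j - (if (j:ℕ)/2 = (i:ℕ)/2 then gw m a b c j else 0) := by
    intro j
    by_cases h : (j:ℕ)/2 = (i:ℕ)/2
    · simp [h]
    · simp [h, Ne.symm h]
  rw [Finset.sum_congr rfl (fun j _ => key j), Finset.sum_sub_distrib,
    gw_sum m hm a b c, gw_pair m hm hme a b c i]


open scoped Classical in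
lemma tcp_cross_sum (m : ℕ) (hm : 4 ≤ m) (a b c : ℝ) (i : Fin m) :
    (∑ j : Fin m, if (i:ℕ) = 0 ∧ (j:ℕ) = 0 then gw m a b c j else 0)
      = if (i : ℕ) = 0 then b else 0 := by
  have h0 : (0:ℕ) < m := by omega
  by_cases hi : (i:ℕ) = 0
  · simp only [hi, true_and, if_pos]
    have key : ∀ j : Fin m, (if (j:ℕ) = 0 then gw m a b c j else 0)
        = (if j = (⟨0, h0⟩ : Fin m) then gw m a b c j else 0) := by
      intro j
      by_cases h : (j:ℕ) = 0
      · have : j = (⟨0, h0⟩ : Fin m) := by ext; simpa using h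
        simp [this]
      · have : j ≠ (⟨0, h0⟩ : Fin m) := by simp [Fin.ext_iff]; omega
        simp [h, this]
    rw [Finset.sum_congr rfl (fun j _ => key j), Finset.sum_ite_eq' univ]
    simp [gw]
  · simp [hi]

open scoped Classical in
lemma tcp_row_le (m : ℕ) (hm : 4 ≤ m) (hme : m % 2 = 0) (a b c B : ℝ)
    (h1 : ((m:ℝ) - 2) * c ≤ B * a)
    (h2 : b + ((m:ℝ) - 2) * c ≤ B * b)
    (h3 : a + b + ((m:ℝ) - 4) * c ≤ B * c)
    (v : Fin m ⊕ Fin m) :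
    ∑ u, ((twoCP m).adjMatrix ℝ) v u * (Sum.elim (gw m a b c) (gw m a b c) u)
      ≤ B * Sum.elim (gw m a b c) (gw m a b c) v := by
  rw [Fintype.sum_sum_type]
  cases v with
  | inl i =>
      have e1 : (∑ j : Fin m, ((twoCP m).adjMatrix ℝ) (Sum.inl i) (Sum.inl j)
          * Sum.elim (gw m a b c) (gw m a b c) (Sum.inl j))
          = ∑ j : Fin m, if (i:ℕ)/2 ≠ (j:ℕ)/2 then gw m a b c j else 0 := by
        refine Finset.sum_congr rfl fun j _ => ?_
        rw [SimpleGraph.adjMatrix_apply]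
        by_cases h : (i:ℕ)/2 ≠ (j:ℕ)/2
        · rw [if_pos ((adj_ll m i j).2 h), if_pos h, one_mul, Sum.elim_inl]
        · rw [if_neg (fun ha => h ((adj_ll m i j).1 ha)), if_neg h, zero_mul]
      have e2 : (∑ j : Fin m, ((twoCP m).adjMatrix ℝ) (Sum.inl i) (Sum.inr j)
          * Sum.elim (gw m a b c) (gw m a b c) (Sum.inr j))
          = ∑ j : Fin m, if (i:ℕ) = 0 ∧ (j:ℕ) = 0 then gw m a b c j else 0 := by
        refine Finset.sum_congr rfl fun j _ => ?_
        rw [SimpleGraph.adjMatrix_apply]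
        by_cases h : (i:ℕ) = 0 ∧ (j:ℕ) = 0
        · rw [if_pos ((adj_lr m i j).2 h), if_pos h, one_mul, Sum.elim_inr]
        · rw [if_neg (fun ha => h ((adj_lr m i j).1 ha)), if_neg h, zero_mul]
      rw [e1, e2, tcp_inner_sum m hm hme a b c i, tcp_cross_sum m hm a b c i, Sum.elim_inl]
      by_cases hi0 : (i:ℕ) = 0
      · have : (i:ℕ)/2 = 0 := by omega
        simp [gw, hi0, this]
        linarith
      · by_cases hi1 : (i:ℕ) = 1
        · have : (i:ℕ)/2 = 0 := by omega
          simp [gw, hi0, hi1, this]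
          linarith
        · have : ¬ ((i:ℕ)/2 = 0) := by omega
          simp [gw, hi0, hi1, this]
          linarith
  | inr i =>
      have e1 : (∑ j : Fin m, ((twoCP m).adjMatrix ℝ) (Sum.inr i) (Sum.inl j)
          * Sum.elim (gw m a b c) (gw m a b c) (Sum.inl j))
          = ∑ j : Fin m, if (i:ℕ) = 0 ∧ (j:ℕ) = 0 then gw m a b c j else 0 := by
        refine Finset.sum_congr rfl fun j _ => ?_
        rw [SimpleGraph.adjMatrix_apply]
        by_cases h : (i:ℕ) = 0 ∧ (j:ℕ) = 0
        · rw [if_pos ((adj_rl m i j).2 ⟨h.2, h.1⟩), if_pos h, one_mul, Sum.elim_inl]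
        · rw [if_neg (fun ha => h (⟨((adj_rl m i j).1 ha).2, ((adj_rl m i j).1 ha).1⟩)),
            if_neg h, zero_mul]
      have e2 : (∑ j : Fin m, ((twoCP m).adjMatrix ℝ) (Sum.inr i) (Sum.inr j)
          * Sum.elim (gw m a b c) (gw m a b c) (Sum.inr j))
          = ∑ j : Fin m, if (i:ℕ)/2 ≠ (j:ℕ)/2 then gw m a b c j else 0 := by
        refine Finset.sum_congr rfl fun j _ => ?_
        rw [SimpleGraph.adjMatrix_apply]
        by_cases h : (i:ℕ)/2 ≠ (j:ℕ)/2
        · rw [if_pos ((adj_rr m i j).2 h), if_pos h, one_mul, Sum.elim_inr]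
        · rw [if_neg (fun ha => h ((adj_rr m i j).1 ha)), if_neg h, zero_mul]
      rw [e1, e2, tcp_inner_sum m hm hme a b c i, tcp_cross_sum m hm a b c i, Sum.elim_inr]
      by_cases hi0 : (i:ℕ) = 0
      · have : (i:ℕ)/2 = 0 := by omega
        simp [gw, hi0, this]
        linarith
      · by_cases hi1 : (i:ℕ) = 1
        · have : (i:ℕ)/2 = 0 := by omega
          simp [gw, hi0, hi1, this]
          linarith
        · have : ¬ ((i:ℕ)/2 = 0) := by omega
          simp [gw, hi0, hi1, this]
          linarith


open scoped Classical in
lemma tcp_eig_le {V : Type*} [Fintype V] [Nonempty V] (G : SimpleGraph V)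
    (w : V → ℝ) (hw : ∀ v, 0 < w v) (B : ℝ)
    (hrow : ∀ v, (∑ u, (G.adjMatrix ℝ) v u * w u) ≤ B * w v)
    (x : ℝ) (f : V → ℝ) (hf : f ≠ 0) (he : (G.adjMatrix ℝ).mulVec f = x • f) :
    x ≤ B := by
  obtain ⟨v, -, hv⟩ := Finset.exists_max_image (univ : Finset V)
    (fun v => |f v| / w v) univ_nonempty
  have hfv : 0 < |f v| := by
    obtain ⟨u, hu⟩ := Function.ne_iff.1 hf
    have h1 : 0 < |f u| / w u := div_pos (abs_pos.2 hu) (hw u)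
    have h2 := hv u (mem_univ u)
    have h3 : 0 < |f v| / w v := lt_of_lt_of_le h1 h2
    by_contra hc
    push_neg at hc
    have : |f v| = 0 := le_antisymm hc (abs_nonneg _)
    rw [this] at h3
    simp at h3
  have key : ∀ u, |f u| ≤ |f v| / w v * w u := by
    intro u
    have h2 := hv u (mem_univ u)
    calc |f u| = |f u| / w u * w u := (div_mul_cancel₀ _ (hw u).ne').symm
      _ ≤ |f v| / w v * w u := mul_le_mul_of_nonneg_right h2 (hw u).le
  have h0 : x * f v = ∑ u, (G.adjMatrix ℝ) v u * f u := by
    have := congrFun he v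
    simpa [Matrix.mulVec, dotProduct, Pi.smul_apply, smul_eq_mul] using this.symm
  have hnn : ∀ u, 0 ≤ (G.adjMatrix ℝ) v u := by
    intro u
    rw [SimpleGraph.adjMatrix_apply]
    split <;> norm_num
  have hx : |x| * |f v| ≤ B * |f v| := by
    calc |x| * |f v| = |x * f v| := (abs_mul x (f v)).symm
      _ = |∑ u, (G.adjMatrix ℝ) v u * f u| := by rw [h0]
      _ ≤ ∑ u, |(G.adjMatrix ℝ) v u * f u| := Finset.abs_sum_le_sum_abs _ _
      _ = ∑ u, (G.adjMatrix ℝ) v u * |f u| := by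
          refine Finset.sum_congr rfl fun u _ => ?_
          rw [abs_mul, abs_of_nonneg (hnn u)]
      _ ≤ ∑ u, (G.adjMatrix ℝ) v u * (|f v| / w v * w u) := by
          refine Finset.sum_le_sum fun u _ => ?_
          exact mul_le_mul_of_nonneg_left (key u) (hnn u)
      _ = |f v| / w v * ∑ u, (G.adjMatrix ℝ) v u * w u := by
          rw [Finset.mul_sum]
          exact Finset.sum_congr rfl fun u _ => by ring
      _ ≤ |f v| / w v * (B * w v) := by
          exact mul_le_mul_of_nonneg_left (hrow v) (div_nonneg (abs_nonneg _) (hw v).le)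
      _ = B * |f v| := by
          rw [show |f v| / w v * (B * w v) = B * (|f v| / w v * w v) by ring,
            div_mul_cancel₀ _ (hw v).ne']
  calc x ≤ |x| := le_abs_self x
    _ ≤ B := le_of_mul_le_mul_right hx hfv

theorem stmt14 (n : ℕ) (hn : 8 ≤ n) (h4 : n % 4 = 0) :
    specRad (twoCP (n / 2)) < (n : ℝ) / 2 + 4 / (n : ℝ) - 2 := by
  classical
  set m := n / 2 with hmdef
  have hm4 : 4 ≤ m := by omega
  have hme : m % 2 = 0 := by omega
  have hn2 : n = 2 * m := by omega
  have hM4 : (4:ℝ) ≤ (m:ℝ) := by exact_mod_cast hm4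
  set M : ℝ := (m:ℝ) with hMdef
  have hM0 : (0:ℝ) < M := by linarith
  have ht : (0:ℝ) ≤ M - 4 := by linarith
  set B : ℝ := M + 2/M - 2 - 1/M^4 with hB
  have hBM : B = (M^5 - 2*M^4 + 2*M^3 - 1) / M^4 := by
    rw [hB]; field_simp; ring
  have h1 : (M - 2) * ((M-1)*(M-2)*(M^2-2*M+2)) ≤ B * (M*(M-1)*(M-2)^2 + 1) := by
    rw [hBM, div_mul_eq_mul_div, le_div_iff₀ (by positivity)]
    nlinarith [pow_nonneg ht 2, pow_nonneg ht 3, pow_nonneg ht 4, pow_nonneg ht 5]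
  have h2 : (M*(M-2)*(M^2-2*M+2) + 1) + (M - 2) * ((M-1)*(M-2)*(M^2-2*M+2))
      ≤ B * (M*(M-2)*(M^2-2*M+2) + 1) := by
    rw [hBM, div_mul_eq_mul_div, le_div_iff₀ (by positivity)]
    nlinarith [pow_nonneg ht 2, pow_nonneg ht 3, pow_nonneg ht 4, pow_nonneg ht 5]
  have h3 : (M*(M-1)*(M-2)^2 + 1) + (M*(M-2)*(M^2-2*M+2) + 1)
      + (M - 4) * ((M-1)*(M-2)*(M^2-2*M+2))
      ≤ B * ((M-1)*(M-2)*(M^2-2*M+2)) := by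
    rw [hBM, div_mul_eq_mul_div, le_div_iff₀ (by positivity)]
    nlinarith [pow_nonneg ht 2, pow_nonneg ht 3, pow_nonneg ht 4, pow_nonneg ht 5,
      pow_nonneg ht 6, pow_nonneg ht 7]
  have ha0 : (0:ℝ) < M*(M-1)*(M-2)^2 + 1 := by nlinarith
  have hb0 : (0:ℝ) < M*(M-2)*(M^2-2*M+2) + 1 := by nlinarith
  have hc0 : (0:ℝ) < (M-1)*(M-2)*(M^2-2*M+2) := by nlinarith
  have hgw : ∀ i : Fin m, 0 < gw m (M*(M-1)*(M-2)^2 + 1) (M*(M-2)*(M^2-2*M+2) + 1)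
      ((M-1)*(M-2)*(M^2-2*M+2)) i := by
    intro i
    unfold gw
    split_ifs <;> assumption
  have hw : ∀ v : Fin m ⊕ Fin m,
      0 < Sum.elim (gw m (M*(M-1)*(M-2)^2 + 1) (M*(M-2)*(M^2-2*M+2) + 1)
        ((M-1)*(M-2)*(M^2-2*M+2)))
        (gw m (M*(M-1)*(M-2)^2 + 1) (M*(M-2)*(M^2-2*M+2) + 1)
        ((M-1)*(M-2)*(M^2-2*M+2))) v := by
    rintro (i | i) <;> exact hgw i
  have hrow := tcp_row_le m hm4 hme (M*(M-1)*(M-2)^2 + 1) (M*(M-2)*(M^2-2*M+2) + 1)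
    ((M-1)*(M-2)*(M^2-2*M+2)) B h1 h2 h3
  haveI : Nonempty (Fin m ⊕ Fin m) := ⟨Sum.inl ⟨0, by omega⟩⟩
  have hB0 : (0:ℝ) ≤ B := by
    rw [hB]
    have e1 : 1/M^4 ≤ 1 := by
      rw [div_le_one (by positivity)]
      nlinarith
    have e2 : (0:ℝ) ≤ 2/M := by positivity
    linarith
  have hsup : specRad (twoCP m) ≤ B := by
    unfold specRad
    apply Real.sSup_le _ hB0
    rintro x ⟨f, hf, he⟩
    exact tcp_eig_le (twoCP m) _ hw B hrow x f hf he
  have hnM : (n:ℝ) = 2*M := by rw [hn2]; push_cast [hMdef]; ring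
  have htarget : (n : ℝ) / 2 + 4 / (n : ℝ) - 2 = M + 2/M - 2 := by
    rw [hnM]
    field_simp
    ring
  rw [htarget]
  have hlt : B < M + 2/M - 2 := by
    rw [hB]
    have : (0:ℝ) < 1/M^4 := by positivity
    linarith
  exact lt_of_le_of_lt hsup hlt
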